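/- Let α be an irrational real number that is not of type 3, i.e., for every c > 0 there exist integers a and q ≥ 1 with gcd(a, q) = 1 and 0 < |α − a/q| < c/q³. Then for every integer k ≥ 1 there exist a subsequence N_1 < N_2 < ⋯ of positive integers and a measure ν_k on [0, ∞) of total mass at most 1, supported on the set of nonnegative integers {0, 1, 2, …}, such that μ_k(N_j, α) converges vaguely to ν_k as j → ∞, i.e., ∫ g dμ_k(N_j, α) → ∫ g dν_k for every continuous compactly supported g: [0, ∞) → ℝ. -/

import Mathlib

open MeasureTheory Filter

/-- The list of the fractional parts of `x 1, …, x N`, sorted in increasing order. -/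
noncomputable def sortedFracParts (N : ℕ) (x : ℕ → ℝ) : List ℝ :=
  ((Finset.Icc 1 N).val.map fun n => Int.fract (x n)).sort (· ≤ ·)

/-- `nthBeta N x j` is `β_j`, the `j`-th smallest (1-indexed) among the fractional
parts of `x n`, `1 ≤ n ≤ N`. -/
noncomputable def nthBeta (N : ℕ) (x : ℕ → ℝ) (j : ℕ) : ℝ :=
  (sortedFracParts N x).getD (j - 1) 0

/-- An admissible test function on `ℝ^m`: symmetric under permutations of the
coordinates, invariant under translations along the diagonal, and compactly
supported modulo the diagonal. -/
def IsAdmissible {m : ℕ} (f : (Fin m → ℝ) → ℝ) : Prop :=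
  (∀ (σ : Equiv.Perm (Fin m)) (x : Fin m → ℝ), f (x ∘ σ) = f x) ∧
  (∀ (x : Fin m → ℝ) (t : ℝ), (f fun i => x i + t) = f x) ∧
  ∃ C : ℝ, ∀ x : Fin m → ℝ, f x ≠ 0 → ∀ i j, |x i - x j| ≤ C

open Classical in
/-- The `m`-level correlation `R^(m)(N, x, f)` of the fractional parts of the
sequence `x 1, …, x N`. -/
noncomputable def corr (m N : ℕ) (x : ℕ → ℝ) (f : (Fin m → ℝ) → ℝ) : ℝ :=
  (N : ℝ)⁻¹ * ∑ j ∈ Finset.univ.filter (fun j : Fin m → Fin N => StrictMono j),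
      f fun i => N * nthBeta N x ((j i : ℕ) + 1)

/-- `∫_{0 ≤ x₂ ≤ ⋯ ≤ x_{m+1}} f(0, x₂, …, x_{m+1}) dx₂ ⋯ dx_{m+1}`. -/
noncomputable def poissonValue (m : ℕ) (f : (Fin (m + 1) → ℝ) → ℝ) : ℝ :=
  ∫ y in {y : Fin m → ℝ | (∀ i, 0 ≤ y i) ∧ Monotone y}, f (Fin.cons 0 y)

open scoped ENNReal

/-- The ordered fractional parts `β_j` extended by `β_{N+j} = β_j + 1`. -/
noncomputable def betaExt (N : ℕ) (x : ℕ → ℝ) (j : ℕ) : ℝ :=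
  if j ≤ N then nthBeta N x j else nthBeta N x (j - N) + 1

/-- The `k`-th consecutive spacing measure
`μ_k(N) = N⁻¹ ∑_{j=1}^N δ_{N (β_{j+k} - β_j)}`. -/
noncomputable def spacingMeasure (k N : ℕ) (x : ℕ → ℝ) : Measure ℝ :=
  ((N : ℝ≥0∞))⁻¹ •
    ∑ j ∈ Finset.Icc 1 N,
      Measure.dirac ((N : ℝ) * (betaExt N x (j + k) - betaExt N x j))

/-! ### Auxiliary lemmas -/

section Aux

lemma length_sortedFracParts (N : ℕ) (x : ℕ → ℝ) : (sortedFracParts N x).length = N := by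
  simp [sortedFracParts, Nat.card_Icc]

lemma mem_sortedFracParts {N : ℕ} {x : ℕ → ℝ} {b : ℝ} (hb : b ∈ sortedFracParts N x) :
    ∃ n ∈ Finset.Icc 1 N, b = Int.fract (x n) := by
  rw [sortedFracParts, Multiset.mem_sort] at hb
  obtain ⟨n, hn, rfl⟩ := Multiset.mem_map.mp hb
  exact ⟨n, hn, rfl⟩

lemma nthBeta_mem {N : ℕ} {x : ℕ → ℝ} {j : ℕ} (h1 : 1 ≤ j) (h2 : j ≤ N) :
    nthBeta N x j ∈ sortedFracParts N x := by
  have hl : j - 1 < (sortedFracParts N x).length := by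
    rw [length_sortedFracParts]; omega
  rw [nthBeta, List.getD_eq_getElem _ _ hl]
  exact List.getElem_mem hl

lemma nthBeta_nonneg {N : ℕ} {x : ℕ → ℝ} {j : ℕ} (h1 : 1 ≤ j) (h2 : j ≤ N) :
    0 ≤ nthBeta N x j := by
  obtain ⟨n, _, h⟩ := mem_sortedFracParts (nthBeta_mem h1 h2)
  rw [h]; exact Int.fract_nonneg _

lemma nthBeta_lt_one {N : ℕ} {x : ℕ → ℝ} {j : ℕ} (h1 : 1 ≤ j) (h2 : j ≤ N) :
    nthBeta N x j < 1 := by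
  obtain ⟨n, _, h⟩ := mem_sortedFracParts (nthBeta_mem h1 h2)
  rw [h]; exact Int.fract_lt_one _

lemma nthBeta_mono {N : ℕ} {x : ℕ → ℝ} {i j : ℕ} (h1 : 1 ≤ i) (hij : i ≤ j) (h2 : j ≤ N) :
    nthBeta N x i ≤ nthBeta N x j := by
  have hs : List.Pairwise (· ≤ ·) (sortedFracParts N x) := Multiset.pairwise_sort _ _
  have hi : i - 1 < (sortedFracParts N x).length := by rw [length_sortedFracParts]; omega
  have hj : j - 1 < (sortedFracParts N x).length := by rw [length_sortedFracParts]; omega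
  rw [nthBeta, nthBeta, List.getD_eq_getElem _ _ hi, List.getD_eq_getElem _ _ hj]
  exact hs.rel_get_of_le (a := ⟨i-1, hi⟩) (b := ⟨j-1, hj⟩) (by simp; omega)

lemma betaExt_mono {N : ℕ} {x : ℕ → ℝ} {i j : ℕ} (h1 : 1 ≤ i) (hij : i ≤ j) (h2 : j ≤ 2*N) :
    betaExt N x i ≤ betaExt N x j := by
  rcases le_or_gt j N with hjN | hjN
  · rw [betaExt, betaExt, if_pos (hij.trans hjN), if_pos hjN]
    exact nthBeta_mono h1 hij hjN
  · rcases le_or_gt i N with hiN | hiN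
    · rw [betaExt, betaExt, if_pos hiN, if_neg (by omega)]
      have := nthBeta_lt_one (x := x) h1 hiN
      have := nthBeta_nonneg (N := N) (x := x) (j := j - N) (by omega) (by omega)
      linarith
    · rw [betaExt, betaExt, if_neg (by omega), if_neg (by omega)]
      have := nthBeta_mono (N := N) (x := x) (i := i - N) (j := j - N) (by omega) (by omega) (by omega)
      linarith

-- approximation: each N * fract(n^2 α) is within c of an integer
lemma frac_near_int {α : ℝ} {a : ℤ} {N : ℕ} {c : ℝ} (hN : 1 ≤ N)
    (h : |α - (a : ℝ) / N| < c / (N:ℝ)^3) {n : ℕ} (hn1 : 1 ≤ n) (hn2 : n ≤ N) :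
    ∃ m : ℤ, |(N:ℝ) * Int.fract ((n:ℝ)^2 * α) - m| < c := by
  have hNpos : (0:ℝ) < N := Nat.cast_pos.mpr (by omega)
  refine ⟨(n:ℤ)^2 * a - N * ⌊(n:ℝ)^2 * α⌋, ?_⟩
  have key : (N:ℝ) * Int.fract ((n:ℝ)^2 * α) - (((n:ℤ)^2 * a - N * ⌊(n:ℝ)^2 * α⌋ : ℤ) : ℝ)
      = (n:ℝ)^2 * (N * (α - a / N)) := by
    rw [Int.fract, Int.cast_sub, Int.cast_mul, Int.cast_mul, Int.cast_pow, Int.cast_natCast,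
      Int.cast_natCast]
    field_simp
    ring
  rw [key]
  have hc : 0 ≤ c / (N:ℝ)^3 := le_of_lt (lt_of_le_of_lt (abs_nonneg _) h)
  have hn2' : (n:ℝ)^2 ≤ (N:ℝ)^2 := by
    have : (n:ℝ) ≤ N := by exact_mod_cast hn2
    nlinarith [hNpos, this]
  calc |(n:ℝ)^2 * (N * (α - a / N))| = (n:ℝ)^2 * (N * |α - a / N|) := by
        rw [abs_mul, abs_mul, abs_of_nonneg (by positivity : (0:ℝ) ≤ (n:ℝ)^2),
          abs_of_nonneg hNpos.le]
    _ ≤ (N:ℝ)^2 * (N * |α - a / N|) := by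
        apply mul_le_mul_of_nonneg_right hn2' (by positivity)
    _ < (N:ℝ)^2 * (N * (c / N^3)) := by
        apply mul_lt_mul_of_pos_left (mul_lt_mul_of_pos_left h hNpos) (by positivity)
    _ = c := by field_simp

lemma betaExt_near_int {α : ℝ} {a : ℤ} {N : ℕ} {c : ℝ} (hN : 1 ≤ N)
    (h : |α - (a : ℝ) / N| < c / (N:ℝ)^3) {j : ℕ} (hj1 : 1 ≤ j) (hj2 : j ≤ 2*N) :
    ∃ m : ℤ, |(N:ℝ) * betaExt N (fun n => (n:ℝ)^2 * α) j - m| < c := by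
  set x : ℕ → ℝ := fun n => (n:ℝ)^2 * α with hx
  rcases le_or_gt j N with hjN | hjN
  · obtain ⟨n, hn, hb⟩ := mem_sortedFracParts (nthBeta_mem (x := x) hj1 hjN)
    simp only [Finset.mem_Icc] at hn
    obtain ⟨m, hm⟩ := frac_near_int hN h hn.1 hn.2
    exact ⟨m, by rw [betaExt, if_pos hjN, hb]; exact hm⟩
  · obtain ⟨n, hn, hb⟩ := mem_sortedFracParts
      (nthBeta_mem (N := N) (x := x) (j := j - N) (by omega) (by omega))
    simp only [Finset.mem_Icc] at hn
    obtain ⟨m, hm⟩ := frac_near_int hN h hn.1 hn.2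
    refine ⟨m + N, ?_⟩
    rw [betaExt, if_neg (by omega), hb]
    have : (N:ℝ) * (Int.fract (x n) + 1) - (↑m + ↑N) = (N:ℝ) * Int.fract (x n) - m := by
      push_cast; ring
    push_cast
    rw [this]; exact hm

-- spacing: nonneg and close to its (natural-number) round
lemma spacing_props {α : ℝ} {a : ℤ} {N k : ℕ} {c : ℝ} (hN : 1 ≤ N) (hkN : k ≤ N)
    (hc : c < 1/8) (h : |α - (a : ℝ) / N| < c / (N:ℝ)^3) {l : ℕ} (hl1 : 1 ≤ l) (hl2 : l ≤ N) :
    0 ≤ (N:ℝ) * (betaExt N (fun n => (n:ℝ)^2 * α) (l + k) - betaExt N (fun n => (n:ℝ)^2 * α) l) ∧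
    |(N:ℝ) * (betaExt N (fun n => (n:ℝ)^2 * α) (l + k) - betaExt N (fun n => (n:ℝ)^2 * α) l)
      - ((round ((N:ℝ) * (betaExt N (fun n => (n:ℝ)^2 * α) (l + k)
          - betaExt N (fun n => (n:ℝ)^2 * α) l))).toNat : ℕ)| < 2*c := by
  set x : ℕ → ℝ := fun n => (n:ℝ)^2 * α with hx
  set s := (N:ℝ) * (betaExt N x (l + k) - betaExt N x l) with hs
  have hnonneg : 0 ≤ s := by
    have := betaExt_mono (N := N) (x := x) (i := l) (j := l + k) hl1 (by omega) (by omega)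
    have hN0 : (0:ℝ) ≤ N := Nat.cast_nonneg N
    nlinarith
  obtain ⟨m1, hm1⟩ := betaExt_near_int hN h (j := l + k) (by omega) (by omega)
  obtain ⟨m2, hm2⟩ := betaExt_near_int hN h hl1 (by omega)
  have hsm : |s - (m1 - m2 : ℤ)| < 2*c := by
    have : s - ((m1 : ℝ) - m2) = ((N:ℝ) * betaExt N x (l+k) - m1) - ((N:ℝ) * betaExt N x l - m2) := by
      rw [hs]; ring
    push_cast
    rw [this]
    calc |_| ≤ |(N:ℝ) * betaExt N x (l+k) - m1| + |(N:ℝ) * betaExt N x l - m2| := abs_sub _ _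
      _ < c + c := add_lt_add hm1 hm2
      _ = 2*c := by ring
  have hcpos : 0 < c := by
    have := (abs_nonneg (s - ((m1 - m2 : ℤ) : ℝ))).trans_lt hsm
    linarith
  have hround : round s = m1 - m2 := by
    have h1 : |s - round s| ≤ 1/2 := abs_sub_round s
    have h2 : |(round s : ℝ) - (m1 - m2 : ℤ)| < 1 := by
      calc |(round s : ℝ) - ((m1 - m2 : ℤ) : ℝ)| ≤ |(round s : ℝ) - s| + |s - (m1 - m2 : ℤ)| :=
            abs_sub_le _ s _
        _ < 1/2 + 2*c := add_lt_add_of_le_of_lt (by rwa [abs_sub_comm]) hsm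
        _ < 1 := by linarith
    have : |(round s - (m1 - m2) : ℤ)| < 1 := by
      have := h2
      rw [show ((round s : ℝ) - ((m1 - m2 : ℤ) : ℝ)) = (((round s - (m1 - m2)) : ℤ) : ℝ) by
        push_cast; ring] at this
      exact_mod_cast (by rwa [← Int.cast_abs] at this : ((|round s - (m1-m2)| : ℤ) : ℝ) < 1)
    rw [abs_lt] at this
    omega
  have hm0 : 0 ≤ m1 - m2 := by
    by_contra hneg
    push_neg at hneg
    have : ((m1 - m2 : ℤ) : ℝ) ≤ -1 := by exact_mod_cast (by omega : (m1 - m2 : ℤ) ≤ -1)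
    have := abs_lt.mp hsm
    linarith
  refine ⟨hnonneg, ?_⟩
  have : ((round s).toNat : ℝ) = ((m1 - m2 : ℤ) : ℝ) := by
    rw [hround]; exact_mod_cast Int.toNat_of_nonneg hm0
  rw [this]
  exact hsm

lemma round_min (x : ℝ) (a : ℤ) : |x - round x| ≤ |x - a| := by
  rw [abs_sub_round_eq_min]
  rcases le_or_gt (a:ℝ) (⌊x⌋ : ℝ) with h | h
  · have h1 : Int.fract x ≤ x - a := by
      have : x = Int.fract x + ⌊x⌋ := by rw [Int.fract]; ring
      linarith
    calc min (Int.fract x) (1 - Int.fract x) ≤ Int.fract x := min_le_left _ _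
      _ ≤ |x - a| := h1.trans (le_abs_self _)
  · have ha : (⌊x⌋ : ℝ) + 1 ≤ a := by exact_mod_cast Int.lt_iff_add_one_le.mp (by exact_mod_cast h)
    have h1 : 1 - Int.fract x ≤ a - x := by
      have : x = Int.fract x + ⌊x⌋ := by rw [Int.fract]; ring
      linarith
    calc min (Int.fract x) (1 - Int.fract x) ≤ 1 - Int.fract x := min_le_right _ _
      _ ≤ |x - a| := by rw [abs_sub_comm]; exact h1.trans (le_abs_self _)

lemma exist_large_q (α : ℝ) (hα : Irrational α)
    (hnot3 : ∀ c : ℝ, 0 < c → ∃ (a : ℤ) (q : ℕ), 1 ≤ q ∧ Int.gcd a q = 1 ∧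
      0 < |α - (a : ℝ) / (q : ℝ)| ∧ |α - (a : ℝ) / (q : ℝ)| < c / (q : ℝ) ^ 3) :
    ∀ (Q : ℕ) (c : ℝ), 0 < c → ∃ (q : ℕ) (a : ℤ), Q < q ∧
      |α - (a : ℝ) / (q : ℝ)| < c / (q : ℝ) ^ 3 := by
  intro Q c hc
  set d : ℕ → ℝ := fun q => (q:ℝ)^2 * |(q:ℝ) * α - round ((q:ℝ) * α)| with hd
  have hdpos : ∀ q ∈ Finset.Icc 1 Q, 0 < d q := by
    intro q hq
    simp only [Finset.mem_Icc] at hq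
    have hq1 : (0:ℝ) < q := Nat.cast_pos.mpr (by omega)
    have : (q:ℝ) * α ≠ (round ((q:ℝ)*α) : ℤ) := by
      intro hcon
      have : Irrational ((q:ℝ) * α) := by
        simpa using hα.natCast_mul (m := q) (by omega)
      exact this.ne_int _ hcon
    have : 0 < |(q:ℝ) * α - round ((q:ℝ)*α)| := abs_pos.mpr (sub_ne_zero.mpr this)
    positivity
  obtain ⟨c', hc'pos, hc'le, hc'd⟩ : ∃ c' : ℝ, 0 < c' ∧ c' ≤ c ∧ ∀ q ∈ Finset.Icc 1 Q, c' ≤ d q := by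
    rcases Finset.eq_empty_or_nonempty (Finset.Icc 1 Q) with he | hne
    · exact ⟨c, hc, le_refl _, by simp [he]⟩
    · refine ⟨min c ((Finset.Icc 1 Q).inf' hne d), lt_min hc ?_, min_le_left _ _, ?_⟩
      · exact (Finset.lt_inf'_iff hne).mpr fun q hq => hdpos q hq
      · intro q hq
        exact le_trans (min_le_right _ _) (Finset.inf'_le d hq)
  obtain ⟨a, q, hq1, -, hpos, hlt⟩ := hnot3 c' hc'pos
  have hq0 : (0:ℝ) < q := Nat.cast_pos.mpr (by omega)
  refine ⟨q, a, ?_, lt_of_lt_of_le hlt (by gcongr)⟩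
  by_contra hQq
  push_neg at hQq
  have h1 : c' ≤ d q := hc'd q (Finset.mem_Icc.mpr ⟨hq1, hQq⟩)
  have heq : |α - (a:ℝ)/q| = |(q:ℝ)*α - a| / q := by
    rw [show α - (a:ℝ)/q = ((q:ℝ)*α - a)/q by field_simp [mul_comm], abs_div, abs_of_pos hq0]
  have h2 : |(q:ℝ)*α - round ((q:ℝ)*α)| ≤ |(q:ℝ)*α - a| := round_min _ _
  have h3 : d q / (q:ℝ)^3 = |(q:ℝ)*α - round ((q:ℝ)*α)| / q := by
    rw [hd]; field_simp
  have : |α - (a:ℝ)/q| < |α - (a:ℝ)/q| := by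
    calc |α - (a:ℝ)/q| < c' / (q:ℝ)^3 := hlt
      _ ≤ d q / (q:ℝ)^3 := by gcongr
      _ = |(q:ℝ)*α - round ((q:ℝ)*α)| / q := h3
      _ ≤ |(q:ℝ)*α - a| / q := by gcongr
      _ = |α - (a:ℝ)/q| := heq.symm
  exact absurd this (lt_irrefl _)

/-- The candidate limit measure built from weights on the nonnegative integers. -/
noncomputable def nuOf (w : ℕ → ℝ) : Measure ℝ :=
  Measure.sum (fun i : ℕ => ENNReal.ofReal (w i) • Measure.dirac (i:ℝ))

lemma nuOf_univ (w : ℕ → ℝ) : nuOf w Set.univ = ∑' i, ENNReal.ofReal (w i) := by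
  rw [nuOf, Measure.sum_apply _ MeasurableSet.univ]
  simp [Measure.smul_apply]

lemma nuOf_univ_le (w : ℕ → ℝ) (hw0 : ∀ i, 0 ≤ w i)
    (hw : ∀ s : Finset ℕ, ∑ i ∈ s, w i ≤ 1) : nuOf w Set.univ ≤ 1 := by
  rw [nuOf_univ, ENNReal.tsum_eq_iSup_sum]
  refine iSup_le fun s => ?_
  calc ∑ i ∈ s, ENNReal.ofReal (w i) = ENNReal.ofReal (∑ i ∈ s, w i) :=
        (ENNReal.ofReal_sum_of_nonneg fun i _ => hw0 i).symm
    _ ≤ 1 := by rw [← ENNReal.ofReal_one]; exact ENNReal.ofReal_le_ofReal (hw s)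

lemma nuOf_notRange (w : ℕ → ℝ) :
    nuOf w {t : ℝ | t ∉ Set.range ((↑) : ℕ → ℝ)} = 0 := by
  have hmeas : MeasurableSet {t : ℝ | t ∉ Set.range ((↑) : ℕ → ℝ)} := by
    have : {t : ℝ | t ∉ Set.range ((↑) : ℕ → ℝ)} = (Set.range ((↑) : ℕ → ℝ))ᶜ := rfl
    rw [this]
    exact (Set.countable_range _).measurableSet.compl
  rw [nuOf, Measure.sum_apply _ hmeas]
  have : ∀ i : ℕ, (ENNReal.ofReal (w i) • Measure.dirac ((i:ℕ):ℝ))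
      {t : ℝ | t ∉ Set.range ((↑) : ℕ → ℝ)} = 0 := by
    intro i
    rw [Measure.smul_apply, Measure.dirac_apply' _ hmeas]
    have : ((i:ℕ):ℝ) ∉ {t : ℝ | t ∉ Set.range ((↑) : ℕ → ℝ)} := by
      simp [Set.mem_setOf_eq]
    rw [Set.indicator_of_notMem this]
    simp
  simp [this]

lemma nuOf_finite (w : ℕ → ℝ) (hw0 : ∀ i, 0 ≤ w i)
    (hw : ∀ s : Finset ℕ, ∑ i ∈ s, w i ≤ 1) : IsFiniteMeasure (nuOf w) :=
  ⟨lt_of_le_of_lt (nuOf_univ_le w hw0 hw) ENNReal.one_lt_top⟩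

lemma integral_nuOf (w : ℕ → ℝ) (hw0 : ∀ i, 0 ≤ w i)
    (hw : ∀ s : Finset ℕ, ∑ i ∈ s, w i ≤ 1) (g : ℝ → ℝ) (hg : Continuous g)
    (hgsupp : HasCompactSupport g) (M : ℕ) (hM : ∀ i : ℕ, M ≤ i → g i = 0) :
    ∫ t, g t ∂(nuOf w) = ∑ i ∈ Finset.range M, w i * g i := by
  have : IsFiniteMeasure (nuOf w) := nuOf_finite w hw0 hw
  have hint : Integrable g (nuOf w) := hg.integrable_of_hasCompactSupport hgsupp
  rw [nuOf, integral_sum_measure (by rwa [nuOf] at hint)]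
  have hterm : ∀ i : ℕ, ∫ t, g t ∂(ENNReal.ofReal (w i) • Measure.dirac ((i:ℕ):ℝ))
      = w i * g i := by
    intro i
    rw [integral_smul_measure, integral_dirac, ENNReal.toReal_ofReal (hw0 i), smul_eq_mul]
  rw [tsum_eq_sum (s := Finset.range M) (by
    intro i hi
    rw [hterm i, hM i (by simpa using hi), mul_zero])]
  exact Finset.sum_congr rfl fun i _ => hterm i

lemma integral_spacingMeasure (k N : ℕ) (x : ℕ → ℝ) (g : ℝ → ℝ) (hg : Continuous g)
    (hgsupp : HasCompactSupport g) :
    ∫ t, g t ∂(spacingMeasure k N x) =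
      (N:ℝ)⁻¹ * ∑ l ∈ Finset.Icc 1 N, g ((N:ℝ) * (betaExt N x (l + k) - betaExt N x l)) := by
  rw [spacingMeasure, integral_smul_measure,
    integral_finset_sum_measure (fun l _ => hg.integrable_of_hasCompactSupport hgsupp)]
  simp only [integral_dirac, ENNReal.toReal_inv, ENNReal.toReal_natCast, smul_eq_mul]

lemma sum_g_fiber (N M : ℕ) (g : ℝ → ℝ) (hM : ∀ i : ℕ, M ≤ i → g i = 0) (r : ℕ → ℕ) :
    ∑ l ∈ Finset.Icc 1 N, g (r l) =
      ∑ i ∈ Finset.range M, (((Finset.Icc 1 N).filter (fun l => r l = i)).card : ℝ) * g i := by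
  set ρ : ℕ → ℕ := fun l => min (r l) M with hρ
  have hgr : ∀ l, g (r l) = g (ρ l) := by
    intro l
    rcases lt_or_ge (r l) M with h | h
    · simp [hρ, Nat.min_eq_left h.le]
    · rw [hM _ h, hρ]
      simp only
      rw [Nat.min_eq_right h, hM M le_rfl]
  calc ∑ l ∈ Finset.Icc 1 N, g (r l) = ∑ l ∈ Finset.Icc 1 N, (fun i : ℕ => g i) (ρ l) := by
        exact Finset.sum_congr rfl fun l _ => hgr l
    _ = ∑ b ∈ (Finset.Icc 1 N).image ρ,
          ((Finset.Icc 1 N).filter (fun l => ρ l = b)).card • (fun i : ℕ => g i) b :=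
        Finset.sum_comp (fun i : ℕ => g (i:ℝ)) ρ
    _ = ∑ b ∈ Finset.range (M+1),
          ((Finset.Icc 1 N).filter (fun l => ρ l = b)).card • (fun i : ℕ => g i) b := by
        apply Finset.sum_subset
        · intro b hb
          obtain ⟨l, -, hl⟩ := Finset.mem_image.mp hb
          rw [Finset.mem_range]
          have : min (r l) M = b := hl
          omega
        · intro b _ hb
          have : ((Finset.Icc 1 N).filter (fun l => ρ l = b)).card = 0 := by
            rw [Finset.card_eq_zero, Finset.filter_eq_empty_iff]
            intro l hl hcon
            exact hb (Finset.mem_image.mpr ⟨l, hl, hcon⟩)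
          rw [this, zero_smul]
    _ = ∑ b ∈ Finset.range M,
          ((Finset.Icc 1 N).filter (fun l => ρ l = b)).card • (fun i : ℕ => g i) b := by
        rw [Finset.sum_range_succ]
        simp [hM M le_rfl]
    _ = ∑ i ∈ Finset.range M, (((Finset.Icc 1 N).filter (fun l => r l = i)).card : ℝ) * g i := by
        apply Finset.sum_congr rfl
        intro i hi
        rw [Finset.mem_range] at hi
        have : (Finset.Icc 1 N).filter (fun l => ρ l = i)
            = (Finset.Icc 1 N).filter (fun l => r l = i) := by
          apply Finset.filter_congr
          intro l _
          simp only [hρ, eq_iff_iff]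
          omega
        rw [this, nsmul_eq_mul]

end Aux

/-- If the irrational `α` is not of type `3`, then for every `k ≥ 1` some subsequence of
the consecutive spacing measures `μ_k(N, α)` converges vaguely to a measure of total
mass at most `1` supported on the nonnegative integers. -/
theorem not_type_three_spacing_measures_converge_to_integer_supported
    (α : ℝ) (hα : Irrational α)
    (hnot3 : ∀ c : ℝ, 0 < c → ∃ (a : ℤ) (q : ℕ), 1 ≤ q ∧ Int.gcd a q = 1 ∧
      0 < |α - (a : ℝ) / (q : ℝ)| ∧ |α - (a : ℝ) / (q : ℝ)| < c / (q : ℝ) ^ 3) :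
    ∀ k : ℕ, 1 ≤ k → ∃ N : ℕ → ℕ, StrictMono N ∧ (∀ j, 0 < N j) ∧
      ∃ ν : Measure ℝ, ν Set.univ ≤ 1 ∧
        ν {t : ℝ | t ∉ Set.range ((↑) : ℕ → ℝ)} = 0 ∧
        ∀ g : ℝ → ℝ, Continuous g → HasCompactSupport g →
          Tendsto
            (fun j => ∫ t, g t ∂(spacingMeasure k (N j) (fun n => (n : ℝ) ^ 2 * α)))
            atTop (nhds (∫ t, g t ∂ν)) := by
  intro k hk
  set x : ℕ → ℝ := fun n => (n:ℝ)^2 * α with hxdef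
  set cs : ℕ → ℝ := fun j => (1/16) / ((j:ℝ)+1) with hcsdef
  have hcs_pos : ∀ j : ℕ, 0 < cs j := fun j => by positivity
  have hcs_lt : ∀ j : ℕ, cs j < 1/8 := by
    intro j
    have h0 : (0:ℝ) ≤ (j:ℝ) := Nat.cast_nonneg j
    have h2 : (1/16:ℝ)/((j:ℝ)+1) ≤ 1/16 := div_le_self (by norm_num) (by linarith)
    have : cs j ≤ 1/16 := h2
    linarith
  have hcs_tendsto : Tendsto cs atTop (nhds 0) := by
    have h1 : Tendsto (fun j : ℕ => 1 / ((j:ℝ)+1)) atTop (nhds 0) :=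
      tendsto_one_div_add_atTop_nhds_zero_nat
    have := h1.const_mul (1/16 : ℝ)
    simpa [hcsdef, div_eq_mul_inv, one_div, mul_comm] using this
  have Hstep : ∀ j Q : ℕ, ∃ q : ℕ, ∃ a : ℤ,
      max Q k < q ∧ |α - (a:ℝ)/(q:ℝ)| < cs j/(q:ℝ)^3 := by
    intro j Q
    obtain ⟨q, a, h1, h2⟩ := exist_large_q α hα hnot3 (max Q k) (cs j) (hcs_pos j)
    exact ⟨q, a, h1, h2⟩
  choose F A hF1 hF2 using Hstep
  set Nseq : ℕ → ℕ := fun j => Nat.rec (F 0 0) (fun m prev => F (m+1) prev) j with hNseqdef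
  have hNsucc : ∀ m, Nseq (m+1) = F (m+1) (Nseq m) := fun m => rfl
  have hNmono : StrictMono Nseq := strictMono_nat_of_lt_succ (by
    intro n
    rw [hNsucc]
    exact lt_of_le_of_lt (le_max_left _ _) (hF1 (n+1) (Nseq n)))
  have hprop : ∀ j, k < Nseq j ∧ ∃ a : ℤ, |α - (a:ℝ)/(Nseq j:ℝ)| < cs j/(Nseq j:ℝ)^3 := by
    intro j
    cases j with
    | zero => exact ⟨lt_of_le_of_lt (le_max_right 0 k) (hF1 0 0), A 0 0, hF2 0 0⟩
    | succ m =>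
        exact ⟨lt_of_le_of_lt (le_max_right _ k) (hF1 (m+1) (Nseq m)),
          A (m+1) (Nseq m), hF2 (m+1) (Nseq m)⟩
  have hN1 : ∀ j, 1 ≤ Nseq j := fun j => by have := (hprop j).1; omega
  set rnd : ℕ → ℕ → ℕ :=
    fun N l => (round ((N:ℝ) * (betaExt N x (l+k) - betaExt N x l))).toNat with hrnddef
  set cnt : ℕ → ℕ → ℕ :=
    fun N i => ((Finset.Icc 1 N).filter (fun l => rnd N l = i)).card with hcntdef
  set av : ℕ → ℕ → ℝ := fun j i => (cnt (Nseq j) i : ℝ) / (Nseq j : ℝ) with havdef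
  have hav01 : ∀ j i, av j i ∈ Set.Icc (0:ℝ) 1 := by
    intro j i
    have hNpos : (0:ℝ) < (Nseq j : ℝ) := Nat.cast_pos.mpr (hN1 j)
    constructor
    · exact div_nonneg (Nat.cast_nonneg _) hNpos.le
    · simp only [havdef]
      rw [div_le_one hNpos]
      have : cnt (Nseq j) i ≤ Nseq j := by
        simp only [hcntdef]
        exact (Finset.card_filter_le _ _).trans_eq (by simp [Nat.card_Icc])
      exact_mod_cast this
  set avI : ℕ → ℕ → Set.Icc (0:ℝ) 1 := fun j i => ⟨av j i, hav01 j i⟩ with havIdef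
  obtain ⟨L, -, φ, hφ, hconv⟩ :=
    isCompact_univ.tendsto_subseq (x := avI) (fun n => Set.mem_univ _)
  have hpt : ∀ i, Tendsto (fun j => av (φ j) i) atTop (nhds ((L i : ℝ))) := by
    intro i
    have h1 := tendsto_pi_nhds.mp hconv i
    exact (continuous_subtype_val.continuousAt.tendsto.comp h1)
  set w : ℕ → ℝ := fun i => (L i : ℝ) with hwdef
  have hw0 : ∀ i, 0 ≤ w i := fun i => (L i).2.1
  have hwsum : ∀ s : Finset ℕ, ∑ i ∈ s, w i ≤ 1 := by
    intro s
    have hb : ∀ j, ∑ i ∈ s, av (φ j) i ≤ 1 := by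
      intro j
      have hNpos : (0:ℝ) < (Nseq (φ j) : ℝ) := Nat.cast_pos.mpr (hN1 _)
      have hcard : ∑ i ∈ s, cnt (Nseq (φ j)) i ≤ Nseq (φ j) := by
        set N := Nseq (φ j) with hN
        have hmaps : ∀ l ∈ (Finset.Icc 1 N).filter (fun l => rnd N l ∈ s), rnd N l ∈ s :=
          fun l hl => (Finset.mem_filter.mp hl).2
        have heq := Finset.card_eq_sum_card_fiberwise hmaps
        have hfib : ∀ i ∈ s, ((Finset.Icc 1 N).filter (fun l => rnd N l ∈ s)).filter
            (fun l => rnd N l = i) = (Finset.Icc 1 N).filter (fun l => rnd N l = i) := by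
          intro i hi
          rw [Finset.filter_filter]
          apply Finset.filter_congr
          intro l _
          first | simp only [eq_iff_iff] | skip
          constructor
          · rintro ⟨h1, h2⟩
            first | exact h2 | exact h1
          · intro h
            first | exact ⟨h ▸ hi, h⟩ | exact ⟨h, h ▸ hi⟩
        calc ∑ i ∈ s, cnt N i
            = ((Finset.Icc 1 N).filter (fun l => rnd N l ∈ s)).card := by
              rw [heq]
              exact (Finset.sum_congr rfl fun i hi => by
                simp only [hcntdef]; rw [← hfib i hi]).symm
          _ ≤ (Finset.Icc 1 N).card := Finset.card_filter_le _ _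
          _ = N := by simp [Nat.card_Icc]
      calc ∑ i ∈ s, av (φ j) i = (∑ i ∈ s, (cnt (Nseq (φ j)) i : ℝ)) / (Nseq (φ j) : ℝ) := by
            simp only [havdef]; rw [Finset.sum_div]
        _ ≤ (Nseq (φ j) : ℝ) / (Nseq (φ j) : ℝ) := by
            gcongr
            exact_mod_cast hcard
        _ = 1 := div_self hNpos.ne'
    have hlim : Tendsto (fun j => ∑ i ∈ s, av (φ j) i) atTop (nhds (∑ i ∈ s, w i)) :=
      tendsto_finset_sum s (fun i _ => hpt i)
    exact le_of_tendsto hlim (Eventually.of_forall hb)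
  refine ⟨Nseq ∘ φ, hNmono.comp hφ, fun j => hN1 (φ j),
    nuOf w, nuOf_univ_le w hw0 hwsum, nuOf_notRange w, ?_⟩
  intro g hg hgsupp
  obtain ⟨M, hM⟩ : ∃ M : ℕ, ∀ i : ℕ, M ≤ i → g (i:ℝ) = 0 := by
    obtain ⟨R, hR⟩ := (Metric.isBounded_iff_subset_closedBall 0).mp hgsupp.isBounded
    refine ⟨⌈R⌉₊ + 1, fun i hi => ?_⟩
    apply image_eq_zero_of_notMem_tsupport
    intro hmem
    have := hR hmem
    rw [Metric.mem_closedBall, Real.dist_eq, sub_zero, abs_of_nonneg (Nat.cast_nonneg i)] at this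
    have h1 : R ≤ (⌈R⌉₊ : ℝ) := Nat.le_ceil R
    have h2 : ((⌈R⌉₊ + 1 : ℕ) : ℝ) ≤ (i:ℝ) := Nat.cast_le.mpr hi
    push_cast at h2
    linarith
  rw [integral_nuOf w hw0 hwsum g hg hgsupp M hM]
  set T := ∑ i ∈ Finset.range M, w i * g i with hTdef
  set An : ℕ → ℝ := fun j => ∑ i ∈ Finset.range M, av (φ j) i * g i with hAndef
  have hA : Tendsto An atTop (nhds T) :=
    tendsto_finset_sum _ (fun i _ => (hpt i).mul_const _)
  set Fn : ℕ → ℝ := fun j => ∫ t, g t ∂(spacingMeasure k (Nseq (φ j)) x) with hFndef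
  have hFA : Tendsto (fun j => Fn j - An j) atTop (nhds 0) := by
    rw [NormedAddCommGroup.tendsto_nhds_zero]
    intro ε hε
    obtain ⟨δ, hδpos, hδ⟩ := Metric.uniformContinuous_iff.mp
      (hgsupp.uniformContinuous_of_continuous hg) (ε/2) (by linarith)
    have hev : ∀ᶠ j in atTop, 2 * cs (φ j) < δ := by
      have h2cs : Tendsto (fun j => 2 * cs (φ j)) atTop (nhds 0) := by
        have := (hcs_tendsto.comp hφ.tendsto_atTop).const_mul (2:ℝ)
        simpa using this
      exact h2cs.eventually (gt_mem_nhds hδpos)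
    filter_upwards [hev] with j hj
    obtain ⟨hkN, a, ha⟩ := hprop (φ j)
    set N := Nseq (φ j) with hNdef
    have hNpos : (0:ℝ) < (N : ℝ) := Nat.cast_pos.mpr (hN1 _)
    have hsp : ∀ l, 1 ≤ l → l ≤ N →
        0 ≤ (N:ℝ) * (betaExt N x (l + k) - betaExt N x l) ∧
        |(N:ℝ) * (betaExt N x (l + k) - betaExt N x l) - ((rnd N l : ℕ) : ℝ)| < 2 * cs (φ j) :=
      fun l hl1 hl2 => spacing_props (hN1 (φ j)) hkN.le (hcs_lt (φ j)) ha hl1 hl2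
    have hAn : An j = (N:ℝ)⁻¹ * ∑ l ∈ Finset.Icc 1 N, g ((rnd N l : ℕ) : ℝ) := by
      simp only [hAndef]
      rw [sum_g_fiber N M g hM (rnd N), Finset.mul_sum]
      apply Finset.sum_congr rfl
      intro i _
      show (cnt N i : ℝ) / (N : ℝ) * g i
          = (N:ℝ)⁻¹ * ((((Finset.Icc 1 N).filter (fun l => rnd N l = i)).card : ℝ) * g i)
      simp only [hcntdef]
      ring
    have hFn : Fn j = (N:ℝ)⁻¹ * ∑ l ∈ Finset.Icc 1 N,
        g ((N:ℝ) * (betaExt N x (l + k) - betaExt N x l)) :=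
      integral_spacingMeasure k N x g hg hgsupp
    rw [hFn, hAn, ← mul_sub, ← Finset.sum_sub_distrib]
    have hbound : ∀ l ∈ Finset.Icc 1 N,
        |g ((N:ℝ) * (betaExt N x (l + k) - betaExt N x l)) - g ((rnd N l : ℕ) : ℝ)| ≤ ε/2 := by
      intro l hl
      rw [Finset.mem_Icc] at hl
      have := (hsp l hl.1 hl.2).2
      have hd : dist ((N:ℝ) * (betaExt N x (l + k) - betaExt N x l)) ((rnd N l : ℕ) : ℝ) < δ := by
        rw [Real.dist_eq]
        exact this.trans hj
      have := hδ hd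
      rw [Real.dist_eq] at this
      exact this.le
    calc ‖(N:ℝ)⁻¹ * ∑ l ∈ Finset.Icc 1 N,
          (g ((N:ℝ) * (betaExt N x (l + k) - betaExt N x l)) - g ((rnd N l : ℕ) : ℝ))‖
        = (N:ℝ)⁻¹ * |∑ l ∈ Finset.Icc 1 N,
          (g ((N:ℝ) * (betaExt N x (l + k) - betaExt N x l)) - g ((rnd N l : ℕ) : ℝ))| := by
          rw [Real.norm_eq_abs, abs_mul, abs_of_nonneg (by positivity : (0:ℝ) ≤ (N:ℝ)⁻¹)]
      _ ≤ (N:ℝ)⁻¹ * ∑ l ∈ Finset.Icc 1 N,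
          |g ((N:ℝ) * (betaExt N x (l + k) - betaExt N x l)) - g ((rnd N l : ℕ) : ℝ)| := by
          apply mul_le_mul_of_nonneg_left (Finset.abs_sum_le_sum_abs _ _) (by positivity)
      _ ≤ (N:ℝ)⁻¹ * ∑ l ∈ Finset.Icc 1 N, (ε/2) := by
          apply mul_le_mul_of_nonneg_left (Finset.sum_le_sum hbound) (by positivity)
      _ = (N:ℝ)⁻¹ * ((N:ℝ) * (ε/2)) := by
          rw [Finset.sum_const, Nat.card_Icc]
          simp [nsmul_eq_mul]
      _ = ε/2 := by field_simp
      _ < ε := by linarith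
  have hfinal : Tendsto Fn atTop (nhds T) := by
    have := hFA.add hA
    simpa using this
  exact hfinal
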